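/- Let H be a simple graph with LICL(H) ≤ 5, let H→ be an acyclic orientation of H with source set S, let S′ ⊆ S with |S′| ≥ 3, and for each x ∈ S′ let T_x be a width-one partial DAG tree decomposition with respect to S′ ∖ {x}. Then there exists x ∈ S′ such that (x, T_x) is a good pair. -/

import Mathlib

/-- An acyclic orientation of a simple graph `H`: a relation `D` directing every
edge of `H` (and nothing else) with no directed cycle. -/
structure GraphOrientation {V : Type} (H : SimpleGraph V) : Type where
  D : V → V → Prop
  adj_of_rel : ∀ u v, D u v → H.Adj u v
  rel_of_adj : ∀ u v, H.Adj u v → D u v ∨ D v u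
  acyclic : ∀ v, ¬ Relation.TransGen D v v

namespace GraphOrientation

variable {V : Type} {H : SimpleGraph V}

/-- The set of sources of an acyclic orientation: vertices with no incoming edge. -/
def sources (O : GraphOrientation H) : Set V := {s | ∀ u, ¬ O.D u s}

/-- The set of vertices reachable from `s` by a directed path (including `s`). -/
def reach (O : GraphOrientation H) (s : V) : Set V := {v | Relation.ReflTransGen O.D s v}

/-- The set of vertices reachable from some vertex of `B`. -/
def reachSet (O : GraphOrientation H) (B : Set V) : Set V := ⋃ s ∈ B, O.reach s

end GraphOrientation

/-- `tree` together with the bag assignment `bag` is a (partial) DAG tree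
decomposition of the orientation `O` with respect to the vertex set `Sp`:
a finite tree whose bags are subsets of `Sp` whose union is `Sp`, such that
whenever a node `j` lies on the (unique) path between nodes `i` and `k`,
`reach(bag i) ∩ reach(bag k) ⊆ reach(bag j)`.
Taking `Sp = O.sources` gives the notion of a DAG tree decomposition of `O`. -/
def IsPDTD {V : Type} {H : SimpleGraph V} (O : GraphOrientation H) (Sp : Set V)
    {ι : Type} (tree : SimpleGraph ι) (bag : ι → Set V) : Prop :=
  Finite ι ∧ tree.IsTree ∧ (∀ i, bag i ⊆ Sp) ∧ (⋃ i, bag i) = Sp ∧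
    ∀ (i j k : ι) (p : tree.Walk i k), p.IsPath → j ∈ p.support →
      O.reachSet (bag i) ∩ O.reachSet (bag k) ⊆ O.reachSet (bag j)

/-- The width of a bag assignment: the maximum bag size. -/
noncomputable def bagWidth {V ι : Type} (bag : ι → Set V) : ℕ := ⨆ i, (bag i).ncard

/-- A width-one (partial) DAG tree decomposition: every bag is a singleton, and
distinct nodes carry distinct bags (so nodes may be identified with sources). -/
def IsWidthOnePDTD {V : Type} {H : SimpleGraph V} (O : GraphOrientation H) (Sp : Set V)
    {ι : Type} (tree : SimpleGraph ι) (bag : ι → Set V) : Prop :=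
  IsPDTD O Sp tree bag ∧ Function.Injective bag ∧ ∀ i, ∃ s : V, bag i = {s}

/-- `H` contains an induced cycle of length `n`. -/
def HasInducedCycleOfLength {V : Type} (H : SimpleGraph V) (n : ℕ) : Prop :=
  Nonempty (SimpleGraph.cycleGraph n ↪g H)

/-- The unique reachability graph of an orientation `O` over a set `Sp` of sources:
`s₁` and `s₂` are adjacent iff some vertex is reachable from both `s₁` and `s₂`
but from no other member of `Sp`. -/
def URGraph {V : Type} {H : SimpleGraph V} (O : GraphOrientation H) (Sp : Set V) :
    SimpleGraph V where
  Adj s₁ s₂ := s₁ ∈ Sp ∧ s₂ ∈ Sp ∧ s₁ ≠ s₂ ∧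
    ((O.reach s₁ ∩ O.reach s₂) \ O.reachSet (Sp \ {s₁, s₂})).Nonempty
  symm := by
    constructor
    rintro a b ⟨ha, hb, hab, hx⟩
    refine ⟨hb, ha, hab.symm, ?_⟩
    rwa [Set.inter_comm (O.reach b) (O.reach a), Set.pair_comm b a]
  loopless := by
    constructor
    rintro a ⟨-, -, h, -⟩
    exact h rfl

/-- `(x, (tree, bag))` is a good pair: some leaf `ℓ` of the width-one decomposition,
with unique neighbour `d`, satisfies `reach x ∩ reach ℓ ⊆ reach d`. -/
def GoodPair {V : Type} {H : SimpleGraph V} (O : GraphOrientation H)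
    {ι : Type} (tree : SimpleGraph ι) (bag : ι → Set V) (x : V) : Prop :=
  ∃ (i j : ι) (l d : V), tree.neighborSet i = {j} ∧ bag i = {l} ∧ bag j = {d} ∧
    O.reach x ∩ O.reach l ⊆ O.reach d


namespace GraphOrientation

variable {V : Type} {H : SimpleGraph V}

lemma reach_self (O : GraphOrientation H) (s : V) : s ∈ O.reach s := Relation.ReflTransGen.refl

lemma reach_trans {O : GraphOrientation H} {s u v : V} (h1 : u ∈ O.reach s)
    (h2 : v ∈ O.reach u) : v ∈ O.reach s := Relation.ReflTransGen.trans h1 h2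

lemma reach_step {O : GraphOrientation H} {s u v : V} (h1 : u ∈ O.reach s)
    (h2 : O.D u v) : v ∈ O.reach s := Relation.ReflTransGen.tail h1 h2

end GraphOrientation

namespace DagProof

open GraphOrientation

variable {V : Type} {H : SimpleGraph V}

structure DChain (O : GraphOrientation H) (x y : V) : Type where
  n : ℕ
  f : ℕ → V
  h0 : f 0 = x
  hn : f n = y
  hd : ∀ m, m < n → O.D (f m) (f (m+1))

namespace DChain

variable {O : GraphOrientation H} {x y z x' y' : V}

def nil (O : GraphOrientation H) (x : V) : DChain O x x :=
  ⟨0, fun _ => x, rfl, rfl, fun m hm => absurd hm (Nat.not_lt_zero m)⟩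

def single (h : O.D x y) : DChain O x y :=
  ⟨1, fun m => if m = 0 then x else y, by simp, by simp, by
    intro m hm
    have hm0 : m = 0 := by omega
    subst hm0; simpa using h⟩

@[simp] lemma single_n (h : O.D x y) : (single h).n = 1 := rfl

def copy (c : DChain O x y) (hx : x = x') (hy : y = y') : DChain O x' y' :=
  ⟨c.n, c.f, hx ▸ c.h0, hy ▸ c.hn, c.hd⟩

@[simp] lemma copy_n (c : DChain O x y) (hx : x = x') (hy : y = y') :
    (c.copy hx hy).n = c.n := rfl

def comp (c : DChain O x y) (d : DChain O y z) : DChain O x z := by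
  refine ⟨c.n + d.n, fun m => if m ≤ c.n then c.f m else d.f (m - c.n), by simp [c.h0], ?_, ?_⟩
  · by_cases h : d.n = 0
    · have h1 : c.n + d.n ≤ c.n := by omega
      simp only [h1, if_true]
      have := d.h0; have := d.hn
      have hyz : y = z := by rw [← d.h0]; rw [← h]; exact d.hn
      rw [h, Nat.add_zero, c.hn, hyz]
    · have h1 : ¬ (c.n + d.n ≤ c.n) := by omega
      simp only [h1, if_false, Nat.add_sub_cancel_left, d.hn]
  · intro m hm
    by_cases h1 : m + 1 ≤ c.n
    · have h2 : m ≤ c.n := by omega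
      simp only [h1, h2, if_true]
      exact c.hd m (by omega)
    · by_cases h2 : m ≤ c.n
      · have hm' : m = c.n := by omega
        have hd0 : O.D (d.f 0) (d.f 1) := d.hd 0 (by omega)
        rw [d.h0] at hd0
        subst hm'
        have h5 : ¬ (c.n + 1 ≤ c.n) := by omega
        have h6 : c.n + 1 - c.n = 1 := by omega
        simp only [le_refl, if_true, h5, if_false, h6, c.hn]
        exact hd0
      · simp only [h1, h2, if_false]
        have h3 : m + 1 - c.n = (m - c.n) + 1 := by omega
        rw [h3]
        exact d.hd (m - c.n) (by omega)

@[simp] lemma comp_n (c : DChain O x y) (d : DChain O y z) : (c.comp d).n = c.n + d.n := rfl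

def take (c : DChain O x y) (m : ℕ) (hm : m ≤ c.n) : DChain O x (c.f m) :=
  ⟨m, c.f, c.h0, rfl, fun p hp => c.hd p (by omega)⟩

@[simp] lemma take_n (c : DChain O x y) (m : ℕ) (hm : m ≤ c.n) : (c.take m hm).n = m := rfl

def drop (c : DChain O x y) (m : ℕ) (hm : m ≤ c.n) : DChain O (c.f m) y :=
  ⟨c.n - m, fun p => c.f (m + p), by simp, by
    show c.f (m + (c.n - m)) = y
    have h : m + (c.n - m) = c.n := by omega
    rw [h, c.hn], by
    intro p hp
    show O.D (c.f (m + p)) (c.f (m + (p + 1)))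
    have h : m + (p + 1) = (m + p) + 1 := by omega
    rw [h]
    exact c.hd (m + p) (by omega)⟩

@[simp] lemma drop_n (c : DChain O x y) (m : ℕ) (hm : m ≤ c.n) : (c.drop m hm).n = c.n - m := rfl

lemma reach (c : DChain O x y) : y ∈ O.reach x := by
  have H : ∀ m ≤ c.n, c.f m ∈ O.reach x := by
    intro m
    induction m with
    | zero => intro _; rw [c.h0]; exact O.reach_self x
    | succ p ih =>
      intro hp
      exact reach_step (ih (by omega)) (c.hd p (by omega))
  rw [← c.hn]
  exact H c.n le_rfl

lemma reach_f (c : DChain O x y) (m : ℕ) (hm : m ≤ c.n) : c.f m ∈ O.reach x :=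
  (c.take m hm).reach

lemma f_reach (c : DChain O x y) (m : ℕ) (hm : m ≤ c.n) : y ∈ O.reach (c.f m) :=
  (c.drop m hm).reach

lemma exists_of_reach (h : y ∈ O.reach x) : Nonempty (DChain O x y) := by
  induction h with
  | refl => exact ⟨nil O x⟩
  | tail _ hd ih => exact ⟨ih.some.comp (single hd)⟩

/-- Segment of a chain between two indices. -/
def seg (c : DChain O x y) (m m' : ℕ) (h1 : m ≤ m') (h2 : m' ≤ c.n) :
    DChain O (c.f m) (c.f m') :=
  (c.take m' h2).drop m h1

@[simp] lemma seg_n (c : DChain O x y) (m m' : ℕ) (h1 : m ≤ m') (h2 : m' ≤ c.n) :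
    (c.seg m m' h1 h2).n = m' - m := rfl

lemma f_reach_f (c : DChain O x y) (m m' : ℕ) (h1 : m ≤ m') (h2 : m' ≤ c.n) :
    c.f m' ∈ O.reach (c.f m) := (c.seg m m' h1 h2).reach

end DChain

open GraphOrientation

/-- A cyclic configuration: witnesses `vv i` between consecutive sources `s i`, `s (i+1)`,
together with "valleys": branch points `t i` reachable from `s i` with directed chains
to `vv (i-1)` and to `vv i`. -/
structure Config (O : GraphOrientation H) (S' : Set V) (k : ℕ) (s : ZMod k → V) where
  vv : ZMod k → V
  t : ZMod k → V
  dc : ∀ i, DChain O (t i) (vv (i - 1))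
  uc : ∀ i, DChain O (t i) (vv i)
  ht : ∀ i, t i ∈ O.reach (s i)
  huniq : ∀ i, ∀ y ∈ S', vv i ∈ O.reach y → y = s i ∨ y = s (i + 1)

namespace Config

variable {O : GraphOrientation H} {S' : Set V} {k : ℕ} {s : ZMod k → V}

def len (cfg : Config O S' k s) (i : ZMod k) : ℕ := (cfg.dc i).n + (cfg.uc i).n

noncomputable def total [NeZero k] (cfg : Config O S' k s) : ℕ := ∑ i : ZMod k, cfg.len i

def pos (cfg : Config O S' k s) (i : ZMod k) (p : ℕ) : V :=
  if p ≤ (cfg.dc i).n then (cfg.dc i).f ((cfg.dc i).n - p) else (cfg.uc i).f (p - (cfg.dc i).n)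

variable (cfg : Config O S' k s)

lemma pos_low {i : ZMod k} {p : ℕ} (hp : p ≤ (cfg.dc i).n) :
    cfg.pos i p = (cfg.dc i).f ((cfg.dc i).n - p) := if_pos hp

lemma pos_high {i : ZMod k} {p : ℕ} (hp : (cfg.dc i).n < p) :
    cfg.pos i p = (cfg.uc i).f (p - (cfg.dc i).n) := if_neg (by omega)

@[simp] lemma pos_zero (i : ZMod k) : cfg.pos i 0 = cfg.vv (i - 1) := by
  rw [cfg.pos_low (Nat.zero_le _), Nat.sub_zero, (cfg.dc i).hn]

lemma pos_dn (i : ZMod k) : cfg.pos i ((cfg.dc i).n) = cfg.t i := by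
  rw [cfg.pos_low le_rfl, Nat.sub_self, (cfg.dc i).h0]

lemma pos_len (i : ZMod k) : cfg.pos i (cfg.len i) = cfg.vv i := by
  unfold len
  by_cases h : (cfg.uc i).n = 0
  · rw [h, Nat.add_zero, cfg.pos_dn i, ← (cfg.uc i).h0, ← h, (cfg.uc i).hn]
  · rw [cfg.pos_high (by omega), Nat.add_sub_cancel_left, (cfg.uc i).hn]

/-- chain from `t i` to a low position -/
def cLowUp (i : ZMod k) (a : ℕ) (ha : a ≤ (cfg.dc i).n) :
    DChain O (cfg.t i) (cfg.pos i a) :=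
  ((cfg.dc i).take ((cfg.dc i).n - a) (by omega)).copy rfl (cfg.pos_low ha).symm

@[simp] lemma cLowUp_n (i : ZMod k) (a : ℕ) (ha : a ≤ (cfg.dc i).n) :
    (cfg.cLowUp i a ha).n = (cfg.dc i).n - a := rfl

/-- chain from a low position down to `vv (i-1)` -/
def cLowDn (i : ZMod k) (a : ℕ) (ha : a ≤ (cfg.dc i).n) :
    DChain O (cfg.pos i a) (cfg.vv (i - 1)) :=
  ((cfg.dc i).drop ((cfg.dc i).n - a) (by omega)).copy (cfg.pos_low ha).symm rfl

@[simp] lemma cLowDn_n (i : ZMod k) (a : ℕ) (ha : a ≤ (cfg.dc i).n) :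
    (cfg.cLowDn i a ha).n = a := by
  show (cfg.dc i).n - ((cfg.dc i).n - a) = a
  omega

/-- chain from `t i` up to a high position -/
def cHighUp (i : ZMod k) (a : ℕ) (h1 : (cfg.dc i).n ≤ a) (h2 : a ≤ cfg.len i) :
    DChain O (cfg.t i) (cfg.pos i a) :=
  if h : a ≤ (cfg.dc i).n then
    (DChain.nil O (cfg.t i)).copy rfl (by
      have : a = (cfg.dc i).n := le_antisymm h h1
      rw [this, cfg.pos_dn])
  else
    ((cfg.uc i).take (a - (cfg.dc i).n) (by unfold len at h2; omega)).copy rfl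
      (cfg.pos_high (by omega)).symm

lemma cHighUp_n (i : ZMod k) (a : ℕ) (h1 : (cfg.dc i).n ≤ a) (h2 : a ≤ cfg.len i) :
    (cfg.cHighUp i a h1 h2).n = a - (cfg.dc i).n := by
  unfold cHighUp
  split
  · show 0 = a - (cfg.dc i).n
    omega
  · rfl

/-- chain from a high position up to `vv i` -/
def cHighDn (i : ZMod k) (a : ℕ) (h1 : (cfg.dc i).n ≤ a) (h2 : a ≤ cfg.len i) :
    DChain O (cfg.pos i a) (cfg.vv i) :=
  if h : a ≤ (cfg.dc i).n then
    (cfg.uc i).copy (by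
      have : a = (cfg.dc i).n := le_antisymm h h1
      rw [this, cfg.pos_dn]) rfl
  else
    ((cfg.uc i).drop (a - (cfg.dc i).n) (by unfold len at h2; omega)).copy
      (cfg.pos_high (by omega)).symm rfl

lemma cHighDn_n (i : ZMod k) (a : ℕ) (h1 : (cfg.dc i).n ≤ a) (h2 : a ≤ cfg.len i) :
    (cfg.cHighDn i a h1 h2).n = cfg.len i - a := by
  unfold cHighDn len
  split
  · show (cfg.uc i).n = (cfg.dc i).n + (cfg.uc i).n - a
    omega
  · show (cfg.uc i).n - (a - (cfg.dc i).n) = (cfg.dc i).n + (cfg.uc i).n - a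
    omega

lemma pos_reach (i : ZMod k) (a : ℕ) (h2 : a ≤ cfg.len i) :
    cfg.pos i a ∈ O.reach (s i) := by
  by_cases h : a ≤ (cfg.dc i).n
  · exact GraphOrientation.reach_trans (cfg.ht i) (cfg.cLowUp i a h).reach
  · exact GraphOrientation.reach_trans (cfg.ht i) (cfg.cHighUp i a (by omega) h2).reach

lemma pos_adj (i : ZMod k) (a : ℕ) (ha : a < cfg.len i) :
    H.Adj (cfg.pos i a) (cfg.pos i (a + 1)) := by
  by_cases h : a + 1 ≤ (cfg.dc i).n
  · rw [cfg.pos_low (by omega), cfg.pos_low h]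
    have := (cfg.dc i).hd ((cfg.dc i).n - (a+1)) (by omega)
    have h2 : (cfg.dc i).n - (a + 1) + 1 = (cfg.dc i).n - a := by omega
    rw [h2] at this
    exact (O.adj_of_rel _ _ this).symm
  · by_cases h2 : a ≤ (cfg.dc i).n
    · have ha' : a = (cfg.dc i).n := by omega
      rw [cfg.pos_low h2, cfg.pos_high (by omega), ha']
      have h3 : (cfg.dc i).n - (cfg.dc i).n = 0 := by omega
      have h4 : (cfg.dc i).n + 1 - (cfg.dc i).n = 1 := by omega
      rw [h3, h4, (cfg.dc i).h0]
      have hstep := O.adj_of_rel _ _ ((cfg.uc i).hd 0 (by unfold len at ha; omega))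
      rwa [(cfg.uc i).h0] at hstep
    · rw [cfg.pos_high (by omega), cfg.pos_high (by omega)]
      have h3 : a + 1 - (cfg.dc i).n = (a - (cfg.dc i).n) + 1 := by omega
      rw [h3]
      refine O.adj_of_rel _ _ ((cfg.uc i).hd (a - (cfg.dc i).n) ?_)
      unfold len at ha; omega

/-- low positions reach `vv (i-1)` -/
lemma pos_low_reach (i : ZMod k) (a : ℕ) (ha : a ≤ (cfg.dc i).n) :
    cfg.vv (i - 1) ∈ O.reach (cfg.pos i a) := (cfg.cLowDn i a ha).reach

/-- high positions reach `vv i` -/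
lemma pos_high_reach (i : ZMod k) (a : ℕ) (h1 : (cfg.dc i).n ≤ a) (h2 : a ≤ cfg.len i) :
    cfg.vv i ∈ O.reach (cfg.pos i a) := (cfg.cHighDn i a h1 h2).reach

/-- within the low part, later (shallower) positions are reachable from deeper ones -/
lemma pos_low_mono (i : ZMod k) (a c : ℕ) (hac : a ≤ c) (hc : c ≤ (cfg.dc i).n) :
    cfg.pos i a ∈ O.reach (cfg.pos i c) := by
  have h := (cfg.dc i).f_reach_f ((cfg.dc i).n - c) ((cfg.dc i).n - a) (by omega) (by omega)
  rwa [← cfg.pos_low (by omega : a ≤ (cfg.dc i).n), ← cfg.pos_low hc] at h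

/-- within the high part, later positions are reachable from earlier ones -/
lemma pos_high_mono (i : ZMod k) (a c : ℕ) (h1 : (cfg.dc i).n ≤ a) (hac : a ≤ c)
    (hc : c ≤ cfg.len i) : cfg.pos i c ∈ O.reach (cfg.pos i a) := by
  by_cases h : a ≤ (cfg.dc i).n
  · have ha' : a = (cfg.dc i).n := by omega
    rw [ha', cfg.pos_dn]
    exact GraphOrientation.reach_trans (O.reach_self _) (cfg.cHighUp i c (by omega) hc).reach
  · have h2 := (cfg.uc i).f_reach_f (a - (cfg.dc i).n) (c - (cfg.dc i).n) (by omega)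
      (by unfold len at hc; omega)
    rwa [← cfg.pos_high (by omega), ← cfg.pos_high (by omega)] at h2

end Config

section Kill2

variable {V : Type} {H : SimpleGraph V} {O : GraphOrientation H} {S' : Set V} {k : ℕ}
  {s : ZMod k → V}

lemma zmod_one_ne_zero (hk : 3 ≤ k) : (1 : ZMod k) ≠ 0 := by
  intro h
  have h1 : ((1 : ℕ) : ZMod k) = 0 := by exact_mod_cast h
  rw [ZMod.natCast_eq_zero_iff] at h1
  have := Nat.le_of_dvd one_pos h1
  omega

lemma zmod_two_ne_zero (hk : 3 ≤ k) : (2 : ZMod k) ≠ 0 := by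
  intro h
  have h1 : ((2 : ℕ) : ZMod k) = 0 := by exact_mod_cast h
  rw [ZMod.natCast_eq_zero_iff] at h1
  have := Nat.le_of_dvd two_pos h1
  omega

lemma zmod_succ_ne (hk : 3 ≤ k) (i : ZMod k) : i + 1 ≠ i := by
  intro h
  exact zmod_one_ne_zero hk (by linear_combination h)

lemma zmod_pred_ne (hk : 3 ≤ k) (i : ZMod k) : i - 1 ≠ i := by
  intro h
  exact zmod_one_ne_zero hk (by linear_combination -h)

lemma zmod_pred_ne_succ (hk : 3 ≤ k) (i : ZMod k) : i - 1 ≠ i + 1 := by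
  intro h
  exact zmod_two_ne_zero hk (by linear_combination -h)

lemma zmod_succ_succ_ne (hk : 3 ≤ k) (i : ZMod k) : i + 2 ≠ i := by
  intro h
  exact zmod_two_ne_zero hk (by linear_combination h)

namespace Config

variable (hk : 3 ≤ k) (hinj : Function.Injective s) (hmem : ∀ i, s i ∈ S')
variable (cfg : Config O S' k s)

lemma vv_reach_left (i : ZMod k) : cfg.vv i ∈ O.reach (s i) :=
  GraphOrientation.reach_trans (cfg.ht i) (cfg.uc i).reach

lemma vv_reach_right (i : ZMod k) : cfg.vv i ∈ O.reach (s (i + 1)) := by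
  have h := GraphOrientation.reach_trans (cfg.ht (i + 1)) (cfg.dc (i + 1)).reach
  rwa [add_sub_cancel_right] at h

include hk hinj hmem

lemma uniq_idx {i j : ZMod k} {z : V} (hz : z ∈ O.reach (s j))
    (hv : cfg.vv i ∈ O.reach z) : j = i ∨ j = i + 1 := by
  rcases cfg.huniq i (s j) (hmem j) (GraphOrientation.reach_trans hz hv) with h | h
  · exact Or.inl (hinj h)
  · exact Or.inr (hinj h)

lemma dn_pos (i : ZMod k) : 0 < (cfg.dc i).n := by
  by_contra h
  have h0 : (cfg.dc i).n = 0 := by omega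
  have hteq : cfg.t i = cfg.vv (i - 1) := by
    have h1 := (cfg.dc i).hn
    rw [h0] at h1
    rw [← (cfg.dc i).h0, h1]
  have hreach : cfg.vv i ∈ O.reach (cfg.vv (i - 1)) := by
    have h2 := (cfg.uc i).reach
    rwa [hteq] at h2
  rcases cfg.uniq_idx hk hinj hmem (cfg.vv_reach_left (i - 1)) hreach with h3 | h3
  · exact zmod_pred_ne hk i h3
  · exact zmod_pred_ne_succ hk i h3

lemma un_pos (i : ZMod k) : 0 < (cfg.uc i).n := by
  by_contra h
  have h0 : (cfg.uc i).n = 0 := by omega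
  have hteq : cfg.t i = cfg.vv i := by
    have h1 := (cfg.uc i).hn
    rw [h0] at h1
    rw [← (cfg.uc i).h0, h1]
  have hreach : cfg.vv (i - 1) ∈ O.reach (cfg.vv i) := by
    have h2 := (cfg.dc i).reach
    rwa [hteq] at h2
  rcases cfg.uniq_idx hk hinj hmem (cfg.vv_reach_right i) hreach with h3 | h3
  · exact zmod_pred_ne_succ hk i h3.symm
  · rw [sub_add_cancel] at h3
    exact zmod_succ_ne hk i h3

lemma two_le_len (i : ZMod k) : 2 ≤ cfg.len i := by
  have := cfg.dn_pos hk hinj hmem i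
  have := cfg.un_pos hk hinj hmem i
  unfold len
  omega

omit hinj hmem

/-- replace valleys `i` and `i+1` (and the witness `vv i`) in a configuration. -/
def update2 (i : ZMod k) (v' ti' tj' : V)
    (A : DChain O ti' (cfg.vv (i - 1))) (B : DChain O ti' v')
    (C : DChain O tj' v') (E : DChain O tj' (cfg.vv (i + 1)))
    (hti : ti' ∈ O.reach (s i)) (htj : tj' ∈ O.reach (s (i + 1)))
    (hu : ∀ y ∈ S', v' ∈ O.reach y → y = s i ∨ y = s (i + 1)) : Config O S' k s where
  vv := Function.update cfg.vv i v'
  t := Function.update (Function.update cfg.t i ti') (i + 1) tj'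
  dc := fun j =>
    if h : j = i then
      A.copy (show ti' = _ by
          rw [h, Function.update_of_ne (Ne.symm (zmod_succ_ne hk i)), Function.update_self])
        (show cfg.vv (i - 1) = _ by
          rw [h, Function.update_of_ne (zmod_pred_ne hk i)])
    else if h2 : j = i + 1 then
      C.copy (show tj' = _ by rw [h2, Function.update_self])
        (show v' = _ by rw [h2, add_sub_cancel_right, Function.update_self])
    else
      (cfg.dc j).copy (show cfg.t j = _ by
          rw [Function.update_of_ne h2, Function.update_of_ne h])
        (show cfg.vv (j - 1) = _ by
          rw [Function.update_of_ne (fun hc => h2 (by rw [← hc, sub_add_cancel]))])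
  uc := fun j =>
    if h : j = i then
      B.copy (show ti' = _ by
          rw [h, Function.update_of_ne (Ne.symm (zmod_succ_ne hk i)), Function.update_self])
        (show v' = _ by rw [h, Function.update_self])
    else if h2 : j = i + 1 then
      E.copy (show tj' = _ by rw [h2, Function.update_self])
        (show cfg.vv (i + 1) = _ by rw [h2, Function.update_of_ne (zmod_succ_ne hk i)])
    else
      (cfg.uc j).copy (show cfg.t j = _ by
          rw [Function.update_of_ne h2, Function.update_of_ne h])
        (show cfg.vv j = _ by rw [Function.update_of_ne h])
  ht := fun j => by
    by_cases h2 : j = i + 1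
    · subst h2
      rw [Function.update_self]
      exact htj
    · rw [Function.update_of_ne h2]
      by_cases h : j = i
      · subst h
        rw [Function.update_self]
        exact hti
      · rw [Function.update_of_ne h]
        exact cfg.ht j
  huniq := fun j y hy hr => by
    by_cases h : j = i
    · subst h
      rw [Function.update_self] at hr
      exact hu y hy hr
    · rw [Function.update_of_ne h] at hr
      exact cfg.huniq j y hy hr

variable {i : ZMod k} {v' ti' tj' : V}
  {A : DChain O ti' (cfg.vv (i - 1))} {B : DChain O ti' v'}
  {C : DChain O tj' v'} {E : DChain O tj' (cfg.vv (i + 1))}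
  {hti : ti' ∈ O.reach (s i)} {htj : tj' ∈ O.reach (s (i + 1))}
  {hu : ∀ y ∈ S', v' ∈ O.reach y → y = s i ∨ y = s (i + 1)}

lemma update2_len_self :
    (cfg.update2 hk i v' ti' tj' A B C E hti htj hu).len i = A.n + B.n := by
  unfold update2 len
  simp only [dif_pos rfl]
  rfl

lemma update2_len_succ :
    (cfg.update2 hk i v' ti' tj' A B C E hti htj hu).len (i + 1) = C.n + E.n := by
  unfold update2 len
  simp only [dif_neg (zmod_succ_ne hk i), dif_pos rfl]
  rfl

lemma update2_len_other (j : ZMod k) (h : j ≠ i) (h2 : j ≠ i + 1) :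
    (cfg.update2 hk i v' ti' tj' A B C E hti htj hu).len j = cfg.len j := by
  unfold update2 len
  simp only [dif_neg h, dif_neg h2]
  rfl

lemma update2_total [NeZero k] :
    (cfg.update2 hk i v' ti' tj' A B C E hti htj hu).total + (cfg.len i + cfg.len (i + 1))
      = cfg.total + ((A.n + B.n) + (C.n + E.n)) := by
  classical
  have hins : i + 1 ∈ Finset.univ.erase i :=
    Finset.mem_erase.mpr ⟨zmod_succ_ne hk i, Finset.mem_univ _⟩
  have key : ∀ F : ZMod k → ℕ, ∑ j, F j
      = ∑ j ∈ (Finset.univ.erase i).erase (i + 1), F j + F (i + 1) + F i := by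
    intro F
    rw [Finset.sum_erase_add _ _ hins, Finset.sum_erase_add _ _ (Finset.mem_univ i)]
  unfold total
  rw [key, key]
  have hcongr : ∀ j ∈ (Finset.univ.erase i).erase (i + 1),
      (cfg.update2 hk i v' ti' tj' A B C E hti htj hu).len j = cfg.len j := by
    intro j hj
    rcases Finset.mem_erase.mp hj with ⟨hj1, hj2⟩
    rcases Finset.mem_erase.mp hj2 with ⟨hj3, _⟩
    exact cfg.update2_len_other hk j hj3 hj1
  have hS : ∑ j ∈ (Finset.univ.erase i).erase (i + 1),
      (cfg.update2 hk i v' ti' tj' A B C E hti htj hu).len j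
      = ∑ j ∈ (Finset.univ.erase i).erase (i + 1), cfg.len j :=
    Finset.sum_congr rfl hcongr
  rw [hS, cfg.update2_len_self hk, cfg.update2_len_succ hk]
  omega

end Config

lemma config_nonempty
    (hadj : ∀ i : ZMod k, ∃ w, w ∈ O.reach (s i) ∧ w ∈ O.reach (s (i + 1)) ∧
      ∀ y ∈ S', w ∈ O.reach y → y = s i ∨ y = s (i + 1)) :
    Nonempty (Config O S' k s) := by
  choose w h1 h2 h3 using hadj
  have hdc : ∀ i : ZMod k, Nonempty (DChain O (s i) (w (i - 1))) := fun i =>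
    DChain.exists_of_reach (by have := h2 (i - 1); rwa [sub_add_cancel] at this)
  have huc : ∀ i : ZMod k, Nonempty (DChain O (s i) (w i)) := fun i =>
    DChain.exists_of_reach (h1 i)
  exact ⟨{ vv := w, t := s, dc := fun i => (hdc i).some, uc := fun i => (huc i).some,
           ht := fun i => O.reach_self _, huniq := h3 }⟩

lemma exists_min_config [NeZero k] (hne : Nonempty (Config O S' k s)) :
    ∃ cfg : Config O S' k s, ∀ c' : Config O S' k s, cfg.total ≤ c'.total := by
  obtain ⟨c0⟩ := hne
  have hset : (Set.range (fun c : Config O S' k s => c.total)).Nonempty := ⟨_, ⟨c0, rfl⟩⟩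
  obtain ⟨cfg, hcfg⟩ := Nat.sInf_mem hset
  exact ⟨cfg, fun c' => le_trans (le_of_eq hcfg) (Nat.sInf_le ⟨c', rfl⟩)⟩

end Kill2

section Kill3

variable {V : Type} {H : SimpleGraph V} {O : GraphOrientation H} {S' : Set V} {k : ℕ}
  {s : ZMod k → V}

namespace Config

variable (hk : 3 ≤ k) (hinj : Function.Injective s) (hmem : ∀ i, s i ∈ S')
variable (cfg : Config O S' k s) [NeZero k]
variable (hmin : ∀ c' : Config O S' k s, cfg.total ≤ c'.total)

include hk hmin

lemma shrink_pair (i : ZMod k) {v' ti' tj' : V}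
    (A : DChain O ti' (cfg.vv (i - 1))) (B : DChain O ti' v')
    (C : DChain O tj' v') (E : DChain O tj' (cfg.vv (i + 1)))
    (hti : ti' ∈ O.reach (s i)) (htj : tj' ∈ O.reach (s (i + 1)))
    (hu : ∀ y ∈ S', v' ∈ O.reach y → y = s i ∨ y = s (i + 1)) :
    cfg.len i + cfg.len (i + 1) ≤ (A.n + B.n) + (C.n + E.n) := by
  have htot := cfg.update2_total hk (i := i) (v' := v') (A := A) (B := B) (C := C) (E := E)
      (hti := hti) (htj := htj) (hu := hu)
  have hle := hmin (cfg.update2 hk i v' ti' tj' A B C E hti htj hu)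
  omega

lemma shrink_i (i : ZMod k) {ti' : V}
    (A : DChain O ti' (cfg.vv (i - 1))) (B : DChain O ti' (cfg.vv i))
    (hti : ti' ∈ O.reach (s i)) : cfg.len i ≤ A.n + B.n := by
  have h := cfg.shrink_pair hk hmin i A B
      ((cfg.dc (i + 1)).copy rfl (by rw [add_sub_cancel_right])) (cfg.uc (i + 1))
      hti (cfg.ht (i + 1)) (cfg.huniq i)
  simp only [DChain.copy_n] at h
  have h2 : cfg.len (i + 1) = (cfg.dc (i + 1)).n + (cfg.uc (i + 1)).n := rfl
  omega

include hinj hmem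

lemma kill_same (i : ZMod k) (a c : ℕ) (hac : a < c) (hc : c < cfg.len i) :
    cfg.pos i a ≠ cfg.pos i c ∧ (H.Adj (cfg.pos i a) (cfg.pos i c) → c = a + 1) := by
  have hcl : c ≤ cfg.len i := le_of_lt hc
  have hli : cfg.len i = (cfg.dc i).n + (cfg.uc i).n := rfl
  constructor
  · intro heq
    by_cases hcd : c ≤ (cfg.dc i).n
    · have hkey := cfg.shrink_i hk hmin i
        ((cfg.cLowUp i c hcd).comp ((cfg.cLowDn i a (by omega)).copy heq rfl))
        (cfg.uc i) (cfg.ht i)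
      simp only [DChain.comp_n, DChain.copy_n, cLowUp_n, cLowDn_n] at hkey
      omega
    · by_cases had : (cfg.dc i).n ≤ a
      · have hkey := cfg.shrink_i hk hmin i (cfg.dc i)
          ((cfg.cHighUp i a had (by omega)).comp
            ((cfg.cHighDn i c (by omega) hcl).copy heq.symm rfl))
          (cfg.ht i)
        simp only [DChain.comp_n, DChain.copy_n, cfg.cHighUp_n, cfg.cHighDn_n] at hkey
        omega
      · have hkey := cfg.shrink_i hk hmin i
          (cfg.cLowDn i a (by omega))
          ((cfg.cHighDn i c (by omega) hcl).copy heq.symm rfl)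
          (cfg.pos_reach i a (by omega))
        simp only [DChain.copy_n, cLowDn_n, cfg.cHighDn_n] at hkey
        omega
  · intro hadj
    by_contra hne
    have hc2 : a + 2 ≤ c := by omega
    rcases O.rel_of_adj _ _ hadj with hD | hD
    · by_cases hcd : c ≤ (cfg.dc i).n
      · have hr : cfg.pos i a ∈ O.reach (cfg.pos i c) := cfg.pos_low_mono i a c (by omega) hcd
        exact absurd (Relation.TransGen.tail' hr hD) (O.acyclic _)
      · by_cases had : (cfg.dc i).n ≤ a
        · have hkey := cfg.shrink_i hk hmin i (cfg.dc i)
            ((cfg.cHighUp i a had (by omega)).comp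
              ((DChain.single hD).comp (cfg.cHighDn i c (by omega) hcl)))
            (cfg.ht i)
          simp only [DChain.comp_n, DChain.single_n, cfg.cHighUp_n, cfg.cHighDn_n] at hkey
          omega
        · have hkey := cfg.shrink_i hk hmin i
            (cfg.cLowDn i a (by omega))
            ((DChain.single hD).comp (cfg.cHighDn i c (by omega) hcl))
            (cfg.pos_reach i a (by omega))
          simp only [DChain.comp_n, DChain.single_n, cLowDn_n, cfg.cHighDn_n] at hkey
          omega
    · by_cases had : (cfg.dc i).n ≤ a
      · have hr : cfg.pos i c ∈ O.reach (cfg.pos i a) := cfg.pos_high_mono i a c had (by omega) hcl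
        exact absurd (Relation.TransGen.tail' hr hD) (O.acyclic _)
      · by_cases hcd : c ≤ (cfg.dc i).n
        · have hkey := cfg.shrink_i hk hmin i
            ((cfg.cLowUp i c hcd).comp ((DChain.single hD).comp (cfg.cLowDn i a (by omega))))
            (cfg.uc i) (cfg.ht i)
          simp only [DChain.comp_n, DChain.single_n, cLowUp_n, cLowDn_n] at hkey
          omega
        · have hkey := cfg.shrink_i hk hmin i
            ((DChain.single hD).comp (cfg.cLowDn i a (by omega)))
            (cfg.cHighDn i c (by omega) hcl)
            (cfg.pos_reach i c hcl)
          simp only [DChain.comp_n, DChain.single_n, cLowDn_n, cfg.cHighDn_n] at hkey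
          omega

end Config

end Kill3

section Kill4

variable {V : Type} {H : SimpleGraph V} {O : GraphOrientation H} {S' : Set V} {k : ℕ}
  {s : ZMod k → V}

namespace Config

variable (hk : 3 ≤ k) (hinj : Function.Injective s) (hmem : ∀ i, s i ∈ S')
variable (cfg : Config O S' k s) [NeZero k]
variable (hmin : ∀ c' : Config O S' k s, cfg.total ≤ c'.total)

include hk hinj hmem

lemma side_idx (i : ZMod k) (a : ℕ) (ha : a ≤ cfg.len i) (y : ZMod k)
    (hr : cfg.pos i a ∈ O.reach (s y)) : y = i - 1 ∨ y = i ∨ y = i + 1 := by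
  by_cases hal : a ≤ (cfg.dc i).n
  · rcases cfg.uniq_idx hk hinj hmem hr (cfg.pos_low_reach i a hal) with h | h
    · exact Or.inl h
    · rw [sub_add_cancel] at h
      exact Or.inr (Or.inl h)
  · rcases cfg.uniq_idx hk hinj hmem hr (cfg.pos_high_reach i a (by omega) ha) with h | h
    · exact Or.inr (Or.inl h)
    · exact Or.inr (Or.inr h)

lemma kill_far (i j : ZMod k) (a c : ℕ) (h1 : j ≠ i) (h2 : j ≠ i + 1) (h3 : i ≠ j + 1)
    (ha : a ≤ cfg.len i) (hc : c ≤ cfg.len j) :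
    cfg.pos i a ≠ cfg.pos j c ∧ ¬ H.Adj (cfg.pos i a) (cfg.pos j c) := by
  constructor
  · intro heq
    have hr : cfg.pos i a ∈ O.reach (s j) := by rw [heq]; exact cfg.pos_reach j c hc
    rcases cfg.side_idx hk hinj hmem i a ha j hr with h | h | h
    · exact h3 (by rw [h, sub_add_cancel])
    · exact h1 h
    · exact h2 h
  · intro hadj
    rcases O.rel_of_adj _ _ hadj with hD | hD
    · have hr : cfg.pos j c ∈ O.reach (s i) :=
        GraphOrientation.reach_step (cfg.pos_reach i a ha) hD
      rcases cfg.side_idx hk hinj hmem j c hc i hr with h | h | h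
      · exact h2 (by rw [h, sub_add_cancel])
      · exact h1 h.symm
      · exact h3 h
    · have hr : cfg.pos i a ∈ O.reach (s j) :=
        GraphOrientation.reach_step (cfg.pos_reach j c hc) hD
      rcases cfg.side_idx hk hinj hmem i a ha j hr with h | h | h
      · exact h3 (by rw [h, sub_add_cancel])
      · exact h1 h
      · exact h2 h

include hmin

lemma kill_adjacent (i : ZMod k) (a c : ℕ) (ha : a < cfg.len i) (hc : c < cfg.len (i + 1)) :
    cfg.pos i a ≠ cfg.pos (i + 1) c ∧
    (H.Adj (cfg.pos i a) (cfg.pos (i + 1) c) → (a + 1 = cfg.len i ∧ c = 0)) := by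
  have hli : cfg.len i = (cfg.dc i).n + (cfg.uc i).n := rfl
  have hlj : cfg.len (i + 1) = (cfg.dc (i + 1)).n + (cfg.uc (i + 1)).n := rfl
  have hdposj := cfg.dn_pos hk hinj hmem (i + 1)
  have F1 : ∀ a', a' ≤ (cfg.dc i).n → cfg.pos i a' ∈ O.reach (s (i + 1)) → False := by
    intro a' hal hr
    rcases cfg.uniq_idx hk hinj hmem hr (cfg.pos_low_reach i a' hal) with h | h
    · exact zmod_pred_ne_succ hk i h.symm
    · rw [sub_add_cancel] at h
      exact zmod_succ_ne hk i h
  have F2 : ∀ c', (cfg.dc (i + 1)).n ≤ c' → c' ≤ cfg.len (i + 1) →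
      cfg.pos (i + 1) c' ∈ O.reach (s i) → False := by
    intro c' hch hcl hr
    rcases cfg.uniq_idx hk hinj hmem hr (cfg.pos_high_reach (i + 1) c' hch hcl) with h | h
    · exact zmod_succ_ne hk i h.symm
    · exact zmod_succ_succ_ne hk i (by linear_combination -h)
  have hwlow : ∀ c', c' ≤ (cfg.dc (i + 1)).n → cfg.vv i ∈ O.reach (cfg.pos (i + 1) c') := by
    intro c' hcc
    have h := cfg.pos_low_reach (i + 1) c' hcc
    rwa [add_sub_cancel_right] at h
  constructor
  · intro heq
    by_cases hal : a ≤ (cfg.dc i).n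
    · exact F1 a hal (by rw [heq]; exact cfg.pos_reach (i + 1) c (le_of_lt hc))
    · by_cases hch : (cfg.dc (i + 1)).n ≤ c
      · exact F2 c hch (le_of_lt hc) (by rw [← heq]; exact cfg.pos_reach i a (le_of_lt ha))
      · have hu : ∀ y ∈ S', cfg.pos i a ∈ O.reach y → y = s i ∨ y = s (i + 1) := fun y hy hr =>
          cfg.huniq i y hy (GraphOrientation.reach_trans hr
            (cfg.pos_high_reach i a (by omega) (le_of_lt ha)))
        have hkey := cfg.shrink_pair hk hmin i (v' := cfg.pos i a)
          (cfg.dc i) (cfg.cHighUp i a (by omega) (le_of_lt ha))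
          ((cfg.cLowUp (i + 1) c (by omega)).copy rfl heq.symm) (cfg.uc (i + 1))
          (cfg.ht i) (cfg.ht (i + 1)) hu
        simp only [DChain.copy_n, cLowUp_n, cfg.cHighUp_n] at hkey
        omega
  · intro hadj
    rcases O.rel_of_adj _ _ hadj with hD | hD
    · have hwr : cfg.pos (i + 1) c ∈ O.reach (s i) :=
        GraphOrientation.reach_step (cfg.pos_reach i a (le_of_lt ha)) hD
      by_cases hch : (cfg.dc (i + 1)).n ≤ c
      · exact (F2 c hch (le_of_lt hc) hwr).elim
      · have hu : ∀ y ∈ S', cfg.pos (i + 1) c ∈ O.reach y → y = s i ∨ y = s (i + 1) :=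
          fun y hy hr => cfg.huniq i y hy
            (GraphOrientation.reach_trans hr (hwlow c (by omega)))
        by_cases hal : a ≤ (cfg.dc i).n
        · have hkey := cfg.shrink_pair hk hmin i (v' := cfg.pos (i + 1) c)
            (cfg.cLowDn i a hal) (DChain.single hD)
            (cfg.cLowUp (i + 1) c (by omega)) (cfg.uc (i + 1))
            (cfg.pos_reach i a (le_of_lt ha)) (cfg.ht (i + 1)) hu
          simp only [cLowDn_n, DChain.single_n, cLowUp_n] at hkey
          omega
        · have hkey := cfg.shrink_pair hk hmin i (v' := cfg.pos (i + 1) c)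
            (cfg.dc i) ((cfg.cHighUp i a (by omega) (le_of_lt ha)).comp (DChain.single hD))
            (cfg.cLowUp (i + 1) c (by omega)) (cfg.uc (i + 1))
            (cfg.ht i) (cfg.ht (i + 1)) hu
          simp only [DChain.comp_n, cfg.cHighUp_n, DChain.single_n, cLowUp_n] at hkey
          omega
    · have hur : cfg.pos i a ∈ O.reach (s (i + 1)) :=
        GraphOrientation.reach_step (cfg.pos_reach (i + 1) c (le_of_lt hc)) hD
      by_cases hal : a ≤ (cfg.dc i).n
      · exact (F1 a hal hur).elim
      · have hu : ∀ y ∈ S', cfg.pos i a ∈ O.reach y → y = s i ∨ y = s (i + 1) := fun y hy hr =>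
          cfg.huniq i y hy (GraphOrientation.reach_trans hr
            (cfg.pos_high_reach i a (by omega) (le_of_lt ha)))
        by_cases hch : c ≤ (cfg.dc (i + 1)).n
        · have hkey := cfg.shrink_pair hk hmin i (v' := cfg.pos i a)
            (cfg.dc i) (cfg.cHighUp i a (by omega) (le_of_lt ha))
            ((cfg.cLowUp (i + 1) c hch).comp (DChain.single hD)) (cfg.uc (i + 1))
            (cfg.ht i) (cfg.ht (i + 1)) hu
          simp only [DChain.comp_n, cfg.cHighUp_n, DChain.single_n, cLowUp_n] at hkey
          omega
        · have hkey := cfg.shrink_pair hk hmin i (v' := cfg.pos i a)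
            (cfg.dc i) (cfg.cHighUp i a (by omega) (le_of_lt ha))
            (DChain.single hD) (cfg.cHighDn (i + 1) c (by omega) (le_of_lt hc))
            (cfg.ht i) (cfg.pos_reach (i + 1) c (le_of_lt hc)) hu
          simp only [cfg.cHighUp_n, DChain.single_n, cfg.cHighDn_n] at hkey
          omega

lemma pos_inj_master (i j : ZMod k) (a c : ℕ) (ha : a < cfg.len i) (hc : c < cfg.len j)
    (heq : cfg.pos i a = cfg.pos j c) : i = j ∧ a = c := by
  by_cases hji : j = i
  · subst hji
    refine ⟨rfl, ?_⟩
    rcases lt_trichotomy a c with h | h | h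
    · exact absurd heq (cfg.kill_same hk hinj hmem hmin j a c h hc).1
    · exact h
    · exact absurd heq.symm (cfg.kill_same hk hinj hmem hmin j c a h ha).1
  · exfalso
    by_cases hj1 : j = i + 1
    · subst hj1
      exact (cfg.kill_adjacent hk hinj hmem hmin i a c ha hc).1 heq
    · by_cases hi1 : i = j + 1
      · subst hi1
        exact (cfg.kill_adjacent hk hinj hmem hmin j c a hc ha).1 heq.symm
      · exact (cfg.kill_far hk hinj hmem i j a c hji hj1 hi1 (le_of_lt ha) (le_of_lt hc)).1 heq

lemma chord_master (i j : ZMod k) (a c : ℕ) (ha : a < cfg.len i) (hc : c < cfg.len j)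
    (hadj : H.Adj (cfg.pos i a) (cfg.pos j c)) :
    (j = i ∧ c = a + 1) ∨ (j = i ∧ a = c + 1) ∨
    (j = i + 1 ∧ a + 1 = cfg.len i ∧ c = 0) ∨ (i = j + 1 ∧ c + 1 = cfg.len j ∧ a = 0) := by
  by_cases hji : j = i
  · subst hji
    rcases lt_trichotomy a c with h | h | h
    · exact Or.inl ⟨rfl, (cfg.kill_same hk hinj hmem hmin j a c h hc).2 hadj⟩
    · subst h
      exact absurd rfl hadj.ne
    · exact Or.inr (Or.inl ⟨rfl, (cfg.kill_same hk hinj hmem hmin j c a h ha).2 hadj.symm⟩)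
  · by_cases hj1 : j = i + 1
    · subst hj1
      exact Or.inr (Or.inr (Or.inl ⟨rfl,
        (cfg.kill_adjacent hk hinj hmem hmin i a c ha hc).2 hadj⟩))
    · by_cases hi1 : i = j + 1
      · subst hi1
        exact Or.inr (Or.inr (Or.inr ⟨rfl,
          (cfg.kill_adjacent hk hinj hmem hmin j c a hc ha).2 hadj.symm⟩))
      · exact absurd hadj
          (cfg.kill_far hk hinj hmem i j a c hji hj1 hi1 (le_of_lt ha) (le_of_lt hc)).2

end Config

end Kill4

section Assemble

variable {V : Type} {H : SimpleGraph V} {O : GraphOrientation H} {S' : Set V} {k : ℕ}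
  {s : ZMod k → V}

lemma hasInducedCycle_of_fn {n : ℕ} (hn : 3 ≤ n) (g : ℕ → V)
    (hadj : ∀ p, p < n → H.Adj (g p) (g ((p + 1) % n)))
    (hinj : ∀ p, p < n → ∀ q, q < n → g p = g q → p = q)
    (hchord : ∀ p, p < n → ∀ q, q < n → H.Adj (g p) (g q) →
      q = (p + 1) % n ∨ p = (q + 1) % n) :
    HasInducedCycleOfLength H n := by
  obtain ⟨m, rfl⟩ : ∃ m, n = m + 2 := ⟨n - 2, by omega⟩
  have hfin : ∀ u v : Fin (m + 2), u - v = 1 ↔ u.val = (v.val + 1) % (m + 2) := by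
    intro u v
    rw [sub_eq_iff_eq_add]
    have hv : (1 + v).val = (1 + v.val) % (m + 2) := by
      rw [Fin.add_def, Fin.val_one]
    constructor
    · intro h
      rw [h, hv, Nat.add_comm 1 v.val]
    · intro h
      apply Fin.ext
      rw [hv, Nat.add_comm 1 v.val]
      exact h
  refine ⟨⟨⟨fun i : Fin (m + 2) => g i.val,
    fun u v h => Fin.ext (hinj u.val u.isLt v.val v.isLt h)⟩, ?_⟩⟩
  intro u v
  show H.Adj (g u.val) (g v.val) ↔ (SimpleGraph.cycleGraph (m + 2)).Adj u v
  rw [SimpleGraph.cycleGraph_adj]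
  constructor
  · intro h
    rcases hchord u.val u.isLt v.val v.isLt h with h2 | h2
    · exact Or.inr ((hfin v u).mpr h2)
    · exact Or.inl ((hfin u v).mpr h2)
  · rintro (h | h)
    · have h2 := hadj v.val v.isLt
      rw [← (hfin u v).mp h] at h2
      exact h2.symm
    · have h2 := hadj u.val u.isLt
      rw [← (hfin v u).mp h] at h2
      exact h2

lemma exists_induced_cycle_of_cycle (hk : 3 ≤ k) (hinj : Function.Injective s)
    (hmem : ∀ i, s i ∈ S')
    (hadj : ∀ i : ZMod k, ∃ w, w ∈ O.reach (s i) ∧ w ∈ O.reach (s (i + 1)) ∧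
      ∀ y ∈ S', w ∈ O.reach y → y = s i ∨ y = s (i + 1)) :
    ∃ n, 6 ≤ n ∧ HasInducedCycleOfLength H n := by
  haveI : NeZero k := ⟨by omega⟩
  obtain ⟨cfg, hmin⟩ := exists_min_config (config_nonempty hadj)
  set o : ℕ → ℕ := fun m => ∑ p ∈ Finset.range m, cfg.len ((p : ℕ) : ZMod k) with ho
  have ho0 : o 0 = 0 := by simp [ho]
  have hostep : ∀ m, o (m + 1) = o m + cfg.len ((m : ℕ) : ZMod k) := by
    intro m
    simp [ho, Finset.sum_range_succ]
  have h2len : ∀ i : ZMod k, 2 ≤ cfg.len i := cfg.two_le_len hk hinj hmem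
  have homono : ∀ m m', m ≤ m' → o m ≤ o m' := by
    intro m m' h
    exact Finset.sum_le_sum_of_subset (Finset.range_subset_range.mpr h)
  have hN : 2 * k ≤ o k := by
    calc 2 * k = ∑ _p ∈ Finset.range k, 2 := by simp [mul_comm]
    _ ≤ o k := Finset.sum_le_sum (fun p _ => h2len _)
  have castinj : ∀ m m', m < k → m' < k → ((m : ℕ) : ZMod k) = ((m' : ℕ) : ZMod k) → m = m' := by
    intro m m' hm hm' h
    have := congrArg ZMod.val h
    rwa [ZMod.val_cast_of_lt hm, ZMod.val_cast_of_lt hm'] at this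
  have hsucc_cast : ∀ m : ℕ, (((m + 1 : ℕ)) : ZMod k) = ((m : ℕ) : ZMod k) + 1 := by
    intro m
    push_cast
    ring
  have hkm1 : (((k - 1 : ℕ)) : ZMod k) = ((0 : ℕ) : ZMod k) - 1 := by
    rw [Nat.cast_sub (by omega : 1 ≤ k)]
    simp [ZMod.natCast_self]
  have hdec : ∀ p, p < o k → ∃ m, m < k ∧ o m ≤ p ∧ p < o (m + 1) := by
    intro p hp
    have hgen : ∀ M, p < o M → ∃ m, m < M ∧ o m ≤ p ∧ p < o (m + 1) := by
      intro M
      induction M with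
      | zero => intro h; rw [ho0] at h; omega
      | succ M ih =>
        intro h
        by_cases h2 : p < o M
        · obtain ⟨m, hm1, hm2, hm3⟩ := ih h2
          exact ⟨m, by omega, hm2, hm3⟩
        · exact ⟨M, by omega, by omega, h⟩
    exact hgen k hp
  have hdecu : ∀ m m' p, m < k → m' < k → o m ≤ p → p < o (m + 1) → o m' ≤ p →
      p < o (m' + 1) → m = m' := by
    intro m m' p hm hm' h1 h2 h3 h4
    by_contra hne
    rcases Nat.lt_or_ge m m' with h | h
    · have := homono (m + 1) m' h
      omega
    · have h' : m' + 1 ≤ m := by omega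
      have := homono (m' + 1) m h'
      omega
  choose mfn hm1 hm2 hm3 using hdec
  have hdec : ∀ p, p < o k → ∃ m, m < k ∧ o m ≤ p ∧ p < o (m + 1) := fun p hp =>
    ⟨mfn p hp, hm1 p hp, hm2 p hp, hm3 p hp⟩
  set g : ℕ → V := fun p => if hp : p < o k then
      cfg.pos ((mfn p hp : ℕ) : ZMod k) (p - o (mfn p hp)) else cfg.vv 0 with hg
  have hgeq : ∀ p (hp : p < o k) m, m < k → o m ≤ p → p < o (m + 1) →
      g p = cfg.pos ((m : ℕ) : ZMod k) (p - o m) := by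
    intro p hp m hmk hle hlt
    have he := hdecu (mfn p hp) m p (hm1 p hp) hmk (hm2 p hp) (hm3 p hp) hle hlt
    rw [hg]
    simp only [dif_pos hp]
    simp only [he]
  have hlenm : ∀ m, m < k → o (m + 1) = o m + cfg.len ((m : ℕ) : ZMod k) := fun m _ => hostep m
  have hok : 0 < o k := by omega
  -- value of g on explicit decompositions
  have hgv : ∀ m, m < k → ∀ a, a < cfg.len ((m : ℕ) : ZMod k) →
      g (o m + a) = cfg.pos ((m : ℕ) : ZMod k) a := by
    intro m hmk a hal
    have hlt : o m + a < o (m + 1) := by rw [hostep]; omega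
    have hltk : o m + a < o k := lt_of_lt_of_le hlt (homono (m + 1) k (by omega))
    rw [hgeq (o m + a) hltk m hmk (by omega) hlt]
    congr 1
    omega
  refine ⟨o k, by omega, hasInducedCycle_of_fn (by omega) g ?_ ?_ ?_⟩
  · -- adjacency
    intro p hp
    obtain ⟨m, hmk, hle, hlt⟩ := hdec p hp
    have hlenm' := hostep m
    have hal : p - o m < cfg.len ((m : ℕ) : ZMod k) := by omega
    rw [hgeq p hp m hmk hle hlt]
    by_cases hcase : p + 1 < o (m + 1)
    · have hp1 : p + 1 < o k := lt_of_lt_of_le hcase (homono (m + 1) k (by omega))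
      rw [Nat.mod_eq_of_lt hp1, hgeq (p + 1) hp1 m hmk (by omega) hcase]
      have hstep : p + 1 - o m = (p - o m) + 1 := by omega
      rw [hstep]
      exact cfg.pos_adj _ _ hal
    · -- p + 1 = o (m+1) : end of valley m
      have hpe : p + 1 = o (m + 1) := by omega
      have hlast : p - o m + 1 = cfg.len ((m : ℕ) : ZMod k) := by omega
      have hADJ := cfg.pos_adj ((m : ℕ) : ZMod k) (p - o m) hal
      rw [hlast, cfg.pos_len] at hADJ
      by_cases hmk2 : m + 1 < k
      · have hp1 : p + 1 < o k := by
          have h1 := hostep (m + 1)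
          have h2 := h2len (((m + 1 : ℕ)) : ZMod k)
          have h3 := homono (m + 1 + 1) k (by omega)
          omega
        rw [Nat.mod_eq_of_lt hp1, hgeq (p + 1) hp1 (m + 1) hmk2 (by omega)
          (by rw [hostep (m + 1)]; have := h2len (((m + 1 : ℕ)) : ZMod k); omega)]
        have hz : p + 1 - o (m + 1) = 0 := by omega
        rw [hz, cfg.pos_zero, hsucc_cast, add_sub_cancel_right]
        exact hADJ
      · have hm1k : m + 1 = k := by omega
        have hmod : (p + 1) % o k = 0 := by
          rw [← hm1k] at hok ⊢
          rw [hpe, Nat.mod_self]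
        rw [hmod, hgeq 0 hok 0 (by omega) (by omega)
          (by rw [hostep 0, ho0]; have := h2len ((0 : ℕ) : ZMod k); omega)]
        have hz : 0 - o 0 = 0 := by omega
        rw [hz, cfg.pos_zero]
        have hcast : ((m : ℕ) : ZMod k) = ((0 : ℕ) : ZMod k) - 1 := by
          have : m = k - 1 := by omega
          rw [this, hkm1]
        rw [← hcast]
        exact hADJ
  · -- injectivity
    intro p hp q hq heq
    obtain ⟨m, hmk, hle, hlt⟩ := hdec p hp
    obtain ⟨m', hmk', hle', hlt'⟩ := hdec q hq
    rw [hgeq p hp m hmk hle hlt, hgeq q hq m' hmk' hle' hlt'] at heq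
    have h1 := hostep m
    have h2 := hostep m'
    obtain ⟨hcast, hval⟩ := cfg.pos_inj_master hk hinj hmem hmin _ _ _ _
      (by omega) (by omega) heq
    have hmm : m = m' := castinj m m' hmk hmk' hcast
    subst hmm
    omega
  · -- chords
    intro p hp q hq hadj2
    obtain ⟨m, hmk, hle, hlt⟩ := hdec p hp
    obtain ⟨m', hmk', hle', hlt'⟩ := hdec q hq
    rw [hgeq p hp m hmk hle hlt, hgeq q hq m' hmk' hle' hlt'] at hadj2
    have h1 := hostep m
    have h2 := hostep m'
    have hsucc_key : ∀ mm mm' pp qq, mm < k → mm' < k → o mm ≤ pp → pp < o (mm + 1) →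
        o mm' ≤ qq → qq < o (mm' + 1) →
        ((mm' : ℕ) : ZMod k) = ((mm : ℕ) : ZMod k) + 1 →
        (pp - o mm) + 1 = cfg.len ((mm : ℕ) : ZMod k) → qq - o mm' = 0 →
        qq = (pp + 1) % o k := by
      intro mm mm' pp qq hmm hmm' hle1 hlt1 hle2 hlt2 hrel hlen hc0
      have hq0 : qq = o mm' := by omega
      have hp1 : pp + 1 = o (mm + 1) := by
        have := hostep mm
        omega
      by_cases hmk2 : mm + 1 < k
      · have hmm'eq : mm' = mm + 1 := by
          apply castinj mm' (mm + 1) hmm' hmk2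
          rw [hrel, hsucc_cast]
        subst hmm'eq
        have hlt3 : pp + 1 < o k := by
          rw [hp1]
          have h3 := hostep (mm + 1)
          have h4 := h2len (((mm + 1 : ℕ)) : ZMod k)
          have h5 := homono (mm + 1 + 1) k (by omega)
          omega
        rw [Nat.mod_eq_of_lt hlt3]
        omega
      · have hm1k : mm + 1 = k := by omega
        have hmm'0 : mm' = 0 := by
          apply castinj mm' 0 hmm' (by omega)
          rw [hrel]
          have hmm2 : mm = k - 1 := by omega
          rw [hmm2, hkm1]
          ring
        subst hmm'0
        rw [hp1, hm1k, Nat.mod_self]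
        omega
    rcases cfg.chord_master hk hinj hmem hmin _ _ _ _ (by omega) (by omega) hadj2 with
      ⟨hcast, hval⟩ | ⟨hcast, hval⟩ | ⟨hcast, hval, hc0⟩ | ⟨hcast, hval, hc0⟩
    · left
      have hmm : m' = m := castinj m' m hmk' hmk hcast
      subst hmm
      rw [Nat.mod_eq_of_lt (by omega : p + 1 < o k)]
      omega
    · right
      have hmm : m' = m := castinj m' m hmk' hmk hcast
      subst hmm
      rw [Nat.mod_eq_of_lt (by omega : q + 1 < o k)]
      omega
    · left
      exact hsucc_key m m' p q hmk hmk' hle hlt hle' hlt' hcast (by omega) (by omega)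
    · right
      exact hsucc_key m' m q p hmk' hmk hle' hlt' hle hlt hcast (by omega) (by omega)

end Assemble

section GraphPrelims

variable {W : Type}

lemma exists_zmod_cycle [Fintype W] {G : SimpleGraph W} {x₀ x₁ : W}
    (h01 : G.Adj x₀ x₁)
    (hdeg : ∀ v w, G.Adj v w → ∃ u, G.Adj w u ∧ u ≠ v) :
    ∃ k : ℕ, 3 ≤ k ∧ ∃ f : ZMod k → W, Function.Injective f ∧
      ∀ i, G.Adj (f i) (f (i + 1)) := by
  classical
  let F : ℕ → {p : W × W // G.Adj p.1 p.2} := fun n => Nat.rec ⟨(x₀, x₁), h01⟩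
      (fun _ q => ⟨(q.1.2, Classical.choose (hdeg q.1.1 q.1.2 q.2)),
        (Classical.choose_spec (hdeg q.1.1 q.1.2 q.2)).1⟩) n
  let g : ℕ → W := fun n => (F n).1.1
  have hg1 : ∀ n, g (n + 1) = (F n).1.2 := fun n => rfl
  have hgadj : ∀ n, G.Adj (g n) (g (n + 1)) := fun n => by rw [hg1]; exact (F n).2
  have hgne : ∀ n, g (n + 2) ≠ g n := by
    intro n
    have h2 : g (n + 2) = Classical.choose (hdeg (F n).1.1 (F n).1.2 (F n).2) := rfl
    rw [h2]
    exact (Classical.choose_spec (hdeg (F n).1.1 (F n).1.2 (F n).2)).2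
  have hrep : ∃ n, ∃ m, m < n ∧ g m = g n := by
    obtain ⟨a, b, hab, heq⟩ := Finite.exists_ne_map_eq_of_infinite g
    rcases Nat.lt_or_ge a b with h | h
    · exact ⟨b, a, h, heq⟩
    · exact ⟨a, b, by omega, heq.symm⟩
  obtain ⟨m₀, hm₀lt, hm₀eq⟩ := Nat.find_spec hrep
  have hinj0 : ∀ p q, p < q → q < Nat.find hrep → g p ≠ g q := by
    intro p q hpq hq hne
    exact Nat.find_min hrep hq ⟨p, hpq, hne⟩
  set k := Nat.find hrep - m₀ with hkdef
  have hk3 : 3 ≤ k := by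
    have hk0 : k ≠ 0 := by omega
    have hk1 : k ≠ 1 := by
      intro h1
      have : Nat.find hrep = m₀ + 1 := by omega
      rw [this] at hm₀eq
      exact (hgadj m₀).ne hm₀eq
    have hk2 : k ≠ 2 := by
      intro h2
      have : Nat.find hrep = m₀ + 2 := by omega
      rw [this] at hm₀eq
      exact hgne m₀ hm₀eq.symm
    omega
  haveI : NeZero k := ⟨by omega⟩
  haveI : Fact (1 < k) := ⟨by omega⟩
  refine ⟨k, hk3, fun i => g (m₀ + i.val), ?_, ?_⟩
  · intro i j hij
    have hi := ZMod.val_lt i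
    have hj := ZMod.val_lt j
    have hvv : i.val = j.val := by
      by_contra hne
      rcases Nat.lt_or_ge i.val j.val with h | h
      · exact hinj0 (m₀ + i.val) (m₀ + j.val) (by omega) (by omega) hij
      · exact hinj0 (m₀ + j.val) (m₀ + i.val) (by omega) (by omega) hij.symm
    exact ZMod.val_injective k hvv
  · intro i
    show G.Adj (g (m₀ + i.val)) (g (m₀ + (i + 1).val))
    have hi := ZMod.val_lt i
    have hval : (i + 1).val = (i.val + 1) % k := by
      rw [ZMod.val_add, ZMod.val_one]
    by_cases hc : i.val + 1 < k
    · rw [hval, Nat.mod_eq_of_lt hc]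
      have : m₀ + (i.val + 1) = (m₀ + i.val) + 1 := by omega
      rw [this]
      exact hgadj (m₀ + i.val)
    · have hiv : i.val + 1 = k := by omega
      rw [hval, hiv, Nat.mod_self, Nat.add_zero]
      have h1 : m₀ + i.val + 1 = Nat.find hrep := by omega
      have h2 := hgadj (m₀ + i.val)
      rw [h1, ← hm₀eq] at h2
      exact h2

lemma exists_two_leaves {ι : Type} [Finite ι] {T : SimpleGraph ι} (hT : T.IsTree)
    {a b : ι} (hab : a ≠ b) :
    ∃ x y : ι, x ≠ y ∧ (∃ x', T.neighborSet x = {x'}) ∧ (∃ y', T.neighborSet y = {y'}) := by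
  classical
  haveI : Fintype ι := Fintype.ofFinite ι
  have hdeg1 : ∀ v : ι, 0 < T.degree v := by
    intro v
    rw [T.degree_pos_iff_exists_adj]
    obtain ⟨w, hw⟩ : ∃ w, w ≠ v := by
      by_cases h : v = a
      · subst h
        exact ⟨b, hab.symm⟩
      · exact ⟨a, fun hh => h hh.symm⟩
    obtain ⟨p⟩ := hT.isConnected v w
    have hlen : 0 < p.length := by
      rcases Nat.eq_zero_or_pos p.length with h0 | h0
      · exact absurd (SimpleGraph.Walk.eq_of_length_eq_zero h0) hw.symm
      · exact h0
    have := p.adj_getVert_succ hlen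
    rw [SimpleGraph.Walk.getVert_zero] at this
    exact ⟨_, this⟩
  have hE := hT.card_edgeFinset
  have hsum := T.sum_degrees_eq_twice_card_edges
  set L : Finset ι := Finset.univ.filter (fun v => T.degree v = 1) with hL
  have hcard : 1 ≤ Fintype.card ι := by
    have : a ∈ (Finset.univ : Finset ι) := Finset.mem_univ a
    have := Finset.card_pos.mpr ⟨a, this⟩
    simpa [Finset.card_univ, Nat.one_le_iff_ne_zero, Nat.pos_iff_ne_zero] using this
  have hL2 : 2 ≤ L.card := by
    by_contra hLc
    have hpoint : ∀ v : ι, 2 ≤ T.degree v + (if T.degree v = 1 then 1 else 0) := by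
      intro v
      by_cases h : T.degree v = 1
      · simp [h]
      · have := hdeg1 v
        simp only [h, if_false]
        omega
    have hsum2 : 2 * Fintype.card ι ≤ ∑ v : ι, T.degree v + L.card := by
      have h1 : ∑ _v : ι, 2 ≤ ∑ v : ι, (T.degree v + (if T.degree v = 1 then 1 else 0)) :=
        Finset.sum_le_sum (fun v _ => hpoint v)
      rw [Finset.sum_add_distrib, Finset.sum_boole] at h1
      simp only [Finset.sum_const, Finset.card_univ, smul_eq_mul, Nat.cast_id] at h1
      rw [← hL] at h1
      omega
    omega
  obtain ⟨x, hx, y, hy, hxy⟩ := Finset.one_lt_card.mp (by omega : 1 < L.card)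
  have hdx : T.degree x = 1 := (Finset.mem_filter.mp hx).2
  have hdy : T.degree y = 1 := (Finset.mem_filter.mp hy).2
  obtain ⟨x', hx'⟩ := Finset.card_eq_one.mp hdx
  obtain ⟨y', hy'⟩ := Finset.card_eq_one.mp hdy
  refine ⟨x, y, hxy, ⟨x', ?_⟩, ⟨y', ?_⟩⟩
  · ext w
    rw [SimpleGraph.mem_neighborSet, ← SimpleGraph.mem_neighborFinset, hx']
    simp
  · ext w
    rw [SimpleGraph.mem_neighborSet, ← SimpleGraph.mem_neighborFinset, hy']
    simp

end GraphPrelims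

end DagProof

lemma GraphOrientation.reachSet_singleton {V : Type} {H : SimpleGraph V}
    (O : GraphOrientation H) (t : V) : O.reachSet {t} = O.reach t := by
  simp [GraphOrientation.reachSet]

/-- Suppose the longest induced cycle of `H` has length at most 5.
Let `S'` be a set of sources of an acyclic orientation of `H` with `|S'| ≥ 3`, and
for each `x ∈ S'` let `(tree x, bag x)` be a width-one partial DAG tree
decomposition with respect to `S' ∖ {x}`.  Then there is some `x ∈ S'` for which
`(x, (tree x, bag x))` is a good pair. -/
theorem exists_goodPair_of_licl_le_five {V : Type} [Fintype V] (H : SimpleGraph V)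
    (hlicl : ∀ n : ℕ, 6 ≤ n → ¬ HasInducedCycleOfLength H n)
    (O : GraphOrientation H) (S' : Set V) (hS' : S' ⊆ O.sources) (h3 : 3 ≤ S'.ncard)
    (ι : V → Type) (tree : ∀ x, SimpleGraph (ι x)) (bag : ∀ x, ι x → Set V)
    (hT : ∀ x ∈ S', IsWidthOnePDTD O (S' \ {x}) (tree x) (bag x)) :
    ∃ x ∈ S', GoodPair O (tree x) (bag x) x := by
  classical
  by_contra hcon
  push_neg at hcon
  set G : SimpleGraph V := URGraph O S' with hG
  have hstep : ∀ x ∈ S', ∃ l₁ l₂ : V, l₁ ≠ l₂ ∧ G.Adj x l₁ ∧ G.Adj x l₂ := by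
    intro x hx
    obtain ⟨hPDTD, hbaginj, hbags⟩ := hT x hx
    obtain ⟨hfin, htree, hbagsub, hbagunion, hpath⟩ := hPDTD
    haveI := hfin
    have hS'fin : S'.Finite := Set.toFinite S'
    have hdiff : 1 < (S' \ {x}).ncard := by
      have h1 : (S' \ {x}).ncard = S'.ncard - 1 :=
        Set.ncard_diff_singleton_of_mem hx
      omega
    obtain ⟨a, b, ha, hb, hab⟩ := (Set.one_lt_ncard_iff hS'fin.diff).mp hdiff
    have hnode : ∀ c ∈ S' \ {x}, ∃ nc, bag x nc = {c} := by
      intro c hc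
      rw [← hbagunion] at hc
      obtain ⟨nc, hnc⟩ := Set.mem_iUnion.mp hc
      obtain ⟨σ, hσ⟩ := hbags nc
      rw [hσ] at hnc
      exact ⟨nc, by rw [hσ, Set.mem_singleton_iff.mp hnc]⟩
    obtain ⟨na, hna⟩ := hnode a ha
    obtain ⟨nb, hnb⟩ := hnode b hb
    have hnab : na ≠ nb := by
      intro h
      rw [h, hnb] at hna
      exact hab (Set.singleton_eq_singleton_iff.mp hna).symm
    obtain ⟨n1, n2, hn12, ⟨n1', hn1'⟩, ⟨n2', hn2'⟩⟩ := DagProof.exists_two_leaves htree hnab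
    have hleaf : ∀ (i j : ι x), (tree x).neighborSet i = {j} →
        ∃ l, bag x i = {l} ∧ l ∈ S' \ {x} ∧ G.Adj x l := by
      intro i j hij
      obtain ⟨l, hl⟩ := hbags i
      obtain ⟨d, hd⟩ := hbags j
      have hlmem : l ∈ S' \ {x} := hbagsub i (by rw [hl]; exact Set.mem_singleton l)
      have hnsub : ¬ (O.reach x ∩ O.reach l ⊆ O.reach d) := fun hsub =>
        hcon x hx ⟨i, j, l, d, hij, hl, hd, hsub⟩
      obtain ⟨v, hv, hvd⟩ := Set.not_subset.mp hnsub
      refine ⟨l, hl, hlmem, ?_⟩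
      rw [hG]
      refine ⟨hx, hlmem.1, fun h => hlmem.2 h.symm, ⟨v, ⟨hv.1, hv.2⟩, ?_⟩⟩
      intro hvr
      obtain ⟨z, hzB, hvz⟩ := Set.mem_iUnion₂.mp hvr
      have hz1 : z ∈ S' := hzB.1
      have hz2 : ¬ (z = x ∨ z = l) := hzB.2
      have hzmem : z ∈ S' \ {x} := ⟨hz1, fun h => hz2 (Or.inl h)⟩
      obtain ⟨nz, hnz⟩ := hnode z hzmem
      have hnzi : nz ≠ i := by
        intro h
        rw [h, hl] at hnz
        exact hz2 (Or.inr (Set.singleton_eq_singleton_iff.mp hnz).symm)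
      obtain ⟨p0⟩ := htree.isConnected i nz
      obtain ⟨p, hp⟩ := p0.toPath
      have hlen : 0 < p.length := by
        rcases Nat.eq_zero_or_pos p.length with h0 | h0
        · exact absurd (SimpleGraph.Walk.eq_of_length_eq_zero h0) hnzi.symm
        · exact h0
      have hsecond : p.getVert 1 ∈ (tree x).neighborSet i := by
        have := p.adj_getVert_succ hlen
        rwa [SimpleGraph.Walk.getVert_zero] at this
      rw [hij, Set.mem_singleton_iff] at hsecond
      have hjsup : j ∈ p.support :=
        SimpleGraph.Walk.mem_support_iff_exists_getVert.mpr ⟨1, hsecond, by omega⟩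
      have hkey := hpath i j nz p hp hjsup
      have hvin : v ∈ O.reachSet (bag x i) ∩ O.reachSet (bag x nz) := by
        constructor
        · rw [hl, O.reachSet_singleton]
          exact hv.2
        · rw [hnz, O.reachSet_singleton]
          exact hvz
      have := hkey hvin
      rw [hd, O.reachSet_singleton] at this
      exact hvd this
    obtain ⟨l₁, hl₁, hm₁, hadj₁⟩ := hleaf n1 n1' hn1'
    obtain ⟨l₂, hl₂, hm₂, hadj₂⟩ := hleaf n2 n2' hn2'
    have hne : l₁ ≠ l₂ := by
      intro h
      apply hn12
      apply hbaginj
      rw [hl₁, hl₂, h]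
    exact ⟨l₁, l₂, hne, hadj₁, hadj₂⟩
  have hSne : S'.Nonempty := Set.nonempty_of_ncard_ne_zero (by omega)
  obtain ⟨x₀, hx₀⟩ := hSne
  obtain ⟨l₁, l₂, hl12, hadj₁, hadj₂⟩ := hstep x₀ hx₀
  have hdegG : ∀ v w, G.Adj v w → ∃ u, G.Adj w u ∧ u ≠ v := by
    intro v w hvw
    have hvw' := hvw
    rw [hG] at hvw'
    obtain ⟨hv, hw, hne, -⟩ := hvw'
    obtain ⟨u₁, u₂, hu12, ha₁, ha₂⟩ := hstep w hw
    by_cases h : u₁ = v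
    · refine ⟨u₂, ha₂, ?_⟩
      rw [← h]
      exact hu12.symm
    · exact ⟨u₁, ha₁, h⟩
  obtain ⟨k, hk3, f, hfinj, hfadj⟩ := DagProof.exists_zmod_cycle hadj₁ hdegG
  have hfS : ∀ i, f i ∈ S' := by
    intro i
    have h := hfadj i
    rw [hG] at h
    exact h.1
  have hwit : ∀ i : ZMod k, ∃ w, w ∈ O.reach (f i) ∧ w ∈ O.reach (f (i + 1)) ∧
      ∀ y ∈ S', w ∈ O.reach y → y = f i ∨ y = f (i + 1) := by
    intro i
    have h := hfadj i
    rw [hG] at h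
    obtain ⟨h1, h2, h3x, ⟨w, hw⟩⟩ := h
    refine ⟨w, hw.1.1, hw.1.2, ?_⟩
    intro y hy hr
    by_contra hny
    push_neg at hny
    exact hw.2 (Set.mem_biUnion (⟨hy, fun hc => Or.elim hc hny.1 hny.2⟩ :
      y ∈ S' \ {f i, f (i + 1)}) hr)
  obtain ⟨n, hn6, hcyc⟩ := DagProof.exists_induced_cycle_of_cycle hk3 hfinj hfS hwit
  exact hlicl n hn6 hcyc
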